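/- For every integer k ≥ 1, real numbers a > 0 and q, the identity q^k/2 - Σ_{j=1}^{k} (k choose j) q^{k-j} a^j ((2^{j+1}-1)/(j+1)) B_{j+1} = ((-1)^k / 2) · Σ_{j=0}^{k} (k choose j) (a/2 - q)^{k-j} (a/2)^j (-1)^{⌊j/2⌋} E_j holds. -/

import Mathlib

open Finset Set Filter Topology PowerSeries



lemma two_eq_C : (2 : PowerSeries ℚ) = PowerSeries.C (2 : ℚ) := by rw [map_ofNat]

/-- The sequence `g n = -2 (2^(n+1)-1) B_{n+1}/(n+1)` (values of Euler polynomials at 0). -/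
noncomputable def eulerG (n : ℕ) : ℚ := -2 * (2 ^ (n + 1) - 1) * bernoulli (n + 1) / (n + 1)

noncomputable def eulerGps : PowerSeries ℚ := PowerSeries.mk fun n => eulerG n / n.factorial

lemma eulerG_PS1 : PowerSeries.X * eulerGps
    = 2 * (bernoulliPowerSeries ℚ - rescale (2 : ℚ) (bernoulliPowerSeries ℚ)) := by
  rw [two_eq_C]
  ext n
  rw [PowerSeries.coeff_C_mul]
  cases n with
  | zero =>
    rw [map_sub, coeff_rescale]
    simp [eulerGps, bernoulliPowerSeries]
  | succ n =>
    simp only [coeff_succ_X_mul, eulerGps, coeff_mk, map_sub, coeff_rescale,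
      bernoulliPowerSeries, coeff_mk]
    rw [eulerG, Nat.factorial_succ]
    have h1 : ((n+1).factorial : ℚ) ≠ 0 := Nat.cast_ne_zero.mpr (Nat.factorial_ne_zero _)
    have h2 : ((n).factorial : ℚ) ≠ 0 := Nat.cast_ne_zero.mpr (Nat.factorial_ne_zero _)
    have h3 : ((n:ℚ) + 1) ≠ 0 := by positivity
    push_cast [Algebra.algebraMap_self, RingHom.id_apply]
    field_simp
    push_cast
    ring

lemma eulerG_PS2 : (PowerSeries.exp ℚ + 1) * eulerGps = 2 := by
  have hXe : (PowerSeries.X * (PowerSeries.exp ℚ - 1)) ≠ 0 := by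
    apply mul_ne_zero PowerSeries.X_ne_zero
    intro h
    have := congrArg (PowerSeries.coeff 1) h
    simp [PowerSeries.coeff_exp] at this
  apply mul_right_cancel₀ hXe
  have hB := bernoulliPowerSeries_mul_exp_sub_one ℚ
  have hresc : rescale (2:ℚ) (bernoulliPowerSeries ℚ) * (PowerSeries.exp ℚ ^ 2 - 1)
      = 2 * PowerSeries.X := by
    have h2 : PowerSeries.exp ℚ ^ 2 = rescale (2:ℚ) (PowerSeries.exp ℚ) := by
      simpa using PowerSeries.exp_pow_eq_rescale_exp (A := ℚ) 2
    have hX : rescale (2:ℚ) (PowerSeries.X) = 2 * PowerSeries.X (R := ℚ) := by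
      rw [two_eq_C]
      ext n
      rw [PowerSeries.coeff_C_mul]
      simp only [coeff_rescale, PowerSeries.coeff_X]
      split_ifs with h <;> simp [h]
    calc rescale (2:ℚ) (bernoulliPowerSeries ℚ) * (PowerSeries.exp ℚ ^ 2 - 1)
        = rescale (2:ℚ) (bernoulliPowerSeries ℚ * (PowerSeries.exp ℚ - 1)) := by
          rw [map_mul, h2]; rw [map_sub, map_one]
      _ = 2 * PowerSeries.X := by rw [hB, hX]
  calc (PowerSeries.exp ℚ + 1) * eulerGps * (PowerSeries.X * (PowerSeries.exp ℚ - 1))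
      = (PowerSeries.X * eulerGps) * ((PowerSeries.exp ℚ + 1) * (PowerSeries.exp ℚ - 1)) := by
        ring
    _ = 2 * (bernoulliPowerSeries ℚ - rescale (2:ℚ) (bernoulliPowerSeries ℚ))
          * (PowerSeries.exp ℚ ^ 2 - 1) := by rw [eulerG_PS1]; ring
    _ = 2 * ((bernoulliPowerSeries ℚ * (PowerSeries.exp ℚ - 1)) * (PowerSeries.exp ℚ + 1)
          - rescale (2:ℚ) (bernoulliPowerSeries ℚ) * (PowerSeries.exp ℚ ^ 2 - 1)) := by ring
    _ = 2 * (PowerSeries.X * (PowerSeries.exp ℚ + 1) - 2 * PowerSeries.X) := by rw [hB, hresc]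
    _ = 2 * (PowerSeries.X * (PowerSeries.exp ℚ - 1)) := by ring

lemma eulerG_rec (n : ℕ) :
    (∑ j ∈ range (n + 1), (n.choose j : ℚ) * eulerG (n - j)) + eulerG n
      = if n = 0 then 2 else 0 := by
  have h := congrArg (PowerSeries.coeff n) eulerG_PS2
  rw [add_mul, one_mul, map_add, PowerSeries.coeff_mul,
    Nat.sum_antidiagonal_eq_sum_range_succ_mk, two_eq_C, PowerSeries.coeff_C] at h
  simp only [PowerSeries.coeff_exp, eulerGps, coeff_mk, Algebra.algebraMap_self,
    RingHom.id_apply] at h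
  have hn : ((n.factorial : ℚ)) ≠ 0 := Nat.cast_ne_zero.mpr (Nat.factorial_ne_zero _)
  have key := congrArg (fun z => (n.factorial : ℚ) * z) h
  simp only [mul_add, Finset.mul_sum] at key
  calc (∑ j ∈ range (n + 1), (n.choose j : ℚ) * eulerG (n - j)) + eulerG n
      = (∑ j ∈ range (n + 1),
          (n.factorial : ℚ) * (1 / j.factorial * (eulerG (n - j) / (n - j).factorial)))
        + (n.factorial : ℚ) * (eulerG n / n.factorial) := by
        congr 1
        · apply Finset.sum_congr rfl
          intro j hj
          have hjn : j ≤ n := Nat.lt_succ_iff.mp (Finset.mem_range.mp hj)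
          have hfact : (n.choose j : ℚ) * j.factorial * (n - j).factorial = n.factorial := by
            exact_mod_cast congrArg (Nat.cast (R := ℚ))
              (Nat.choose_mul_factorial_mul_factorial hjn)
          have hj1 : ((j.factorial : ℚ)) ≠ 0 := Nat.cast_ne_zero.mpr (Nat.factorial_ne_zero _)
          have hj2 : (((n - j).factorial : ℚ)) ≠ 0 := Nat.cast_ne_zero.mpr (Nat.factorial_ne_zero _)
          field_simp
          linear_combination eulerG (n - j) * hfact
        · field_simp
      _ = if n = 0 then 2 else 0 := by
        rw [key]
        split_ifs with h0 <;> simp [h0]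


lemma choose_swap {n i j : ℕ} (h : i + j ≤ n) :
    n.choose j * (n - j).choose i = n.choose i * (n - i).choose j := by
  have h1 : n.choose (i + j) * (i + j).choose j = n.choose j * (n - j).choose i := by
    have := Nat.choose_mul (n := n) (k := i + j) (s := j) (Nat.le_add_left _ _)
    simpa using this
  have h2 : n.choose (i + j) * (i + j).choose i = n.choose i * (n - i).choose j := by
    have := Nat.choose_mul (n := n) (k := i + j) (s := i) (Nat.le_add_right _ _)
    simpa using this
  rw [← h1, ← h2, Nat.choose_symm_add]

/-- Binomial convolution with the sequence `c^j`. -/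
lemma conv_exp (c : ℝ) (x : ℕ → ℝ) (n : ℕ) :
    ∑ j ∈ range (n + 1), (n.choose j : ℝ) * c ^ j *
        (∑ i ∈ range (n - j + 1), ((n - j).choose i : ℝ) * x i)
      = ∑ m ∈ range (n + 1), (n.choose m : ℝ) * (1 + c) ^ (n - m) * x m := by
  simp_rw [Finset.mul_sum]
  rw [Finset.sum_comm' (s' := fun i => range (n - i + 1)) (t' := range (n + 1))
    (by intro j i; simp only [Finset.mem_range, Nat.lt_succ_iff]; omega)]
  apply Finset.sum_congr rfl
  intro m hm
  have hmn : m ≤ n := Nat.lt_succ_iff.mp (mem_range.mp hm)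
  have : ∀ j ∈ range (n - m + 1),
      (n.choose j : ℝ) * c ^ j * ((n - j).choose m * x m)
        = (n.choose m : ℝ) * x m * (c ^ j * 1 ^ (n - m - j) * ((n - m).choose j)) := by
    intro j hj
    have hjm : m + j ≤ n := by
      have := Nat.lt_succ_iff.mp (mem_range.mp hj); omega
    have := choose_swap (n := n) (i := m) (j := j) hjm
    have hcast : (n.choose j : ℝ) * ((n - j).choose m : ℝ)
        = (n.choose m : ℝ) * ((n - m).choose j : ℝ) := by exact_mod_cast congrArg Nat.cast this
    calc (n.choose j : ℝ) * c ^ j * ((n - j).choose m * x m)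
        = ((n.choose j : ℝ) * ((n - j).choose m : ℝ)) * (c ^ j * x m) := by ring
      _ = ((n.choose m : ℝ) * ((n - m).choose j : ℝ)) * (c ^ j * x m) := by rw [hcast]
      _ = (n.choose m : ℝ) * x m * (c ^ j * 1 ^ (n - m - j) * ((n - m).choose j)) := by
          rw [one_pow]; ring
  rw [Finset.sum_congr rfl this, ← Finset.mul_sum, ← add_pow c 1 (n - m)]
  ring

lemma iteratedDeriv_const_fun (n : ℕ) (c : ℝ) (x : ℝ) :
    iteratedDeriv n (fun _ : ℝ => c) x = if n = 0 then c else 0 := by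
  induction n generalizing c x with
  | zero => simp
  | succ n ih =>
    rw [iteratedDeriv_succ']
    simp only [deriv_const']
    rw [ih 0 x]
    simp


noncomputable def secR : ℝ → ℝ := fun x => (Real.cos x)⁻¹

lemma differentiableAt_iteratedDeriv {f : ℝ → ℝ} {s : Set ℝ} (hs : IsOpen s)
    (hf : ContDiffOn ℝ ((⊤ : ℕ∞) : WithTop ℕ∞) f s) (j : ℕ) {x : ℝ} (hx : x ∈ s) :
    DifferentiableAt ℝ (iteratedDeriv j f) x := by
  have h1 : DifferentiableWithinAt ℝ (iteratedDerivWithin j f s) s x :=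
    (hf.differentiableOn_iteratedDerivWithin (by exact_mod_cast WithTop.coe_lt_coe.mpr (show (j:ℕ∞) < ⊤ from lt_top_iff_ne_top.mpr (by simp)))
      hs.uniqueDiffOn) x hx
  have h2 : DifferentiableAt ℝ (iteratedDerivWithin j f s) x :=
    h1.differentiableAt (hs.mem_nhds hx)
  apply h2.congr_of_eventuallyEq
  filter_upwards [hs.mem_nhds hx] with y hy
  rw [iteratedDeriv_eq_iteratedFDeriv, iteratedDerivWithin_eq_iteratedFDerivWithin,
    iteratedFDerivWithin_of_isOpen j hs hy]

lemma hasDerivAt_iteratedDeriv {f : ℝ → ℝ} {s : Set ℝ} (hs : IsOpen s)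
    (hf : ContDiffOn ℝ ((⊤ : ℕ∞) : WithTop ℕ∞) f s) (j : ℕ) {x : ℝ} (hx : x ∈ s) :
    HasDerivAt (iteratedDeriv j f) (iteratedDeriv (j + 1) f x) x := by
  have h := (differentiableAt_iteratedDeriv hs hf j hx).hasDerivAt
  rwa [← iteratedDeriv_succ] at h

lemma iteratedDeriv_mul_of_isOpen {f g : ℝ → ℝ} {s : Set ℝ} (hs : IsOpen s)
    (hf : ContDiffOn ℝ ((⊤ : ℕ∞) : WithTop ℕ∞) f s)
    (hg : ContDiffOn ℝ ((⊤ : ℕ∞) : WithTop ℕ∞) g s) :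
    ∀ n, ∀ x ∈ s, iteratedDeriv n (fun y => f y * g y) x
      = ∑ j ∈ range (n + 1),
          (n.choose j : ℝ) * iteratedDeriv j f x * iteratedDeriv (n - j) g x := by
  intro n
  induction n with
  | zero => intro x hx; simp
  | succ n ih =>
    intro x hx
    rw [iteratedDeriv_succ]
    have heq : iteratedDeriv n (fun y => f y * g y) =ᶠ[𝓝 x]
        fun y => ∑ j ∈ range (n + 1),
          (n.choose j : ℝ) * iteratedDeriv j f y * iteratedDeriv (n - j) g y := by
      filter_upwards [hs.mem_nhds hx] with y hy
      exact ih y hy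
    rw [heq.deriv_eq]
    have hder : HasDerivAt (fun y => ∑ j ∈ range (n + 1),
        (n.choose j : ℝ) * iteratedDeriv j f y * iteratedDeriv (n - j) g y)
        (∑ j ∈ range (n + 1),
          ((n.choose j : ℝ) * iteratedDeriv (j + 1) f x * iteratedDeriv (n - j) g x
            + (n.choose j : ℝ) * iteratedDeriv j f x * iteratedDeriv (n - j + 1) g x)) x := by
      apply HasDerivAt.fun_sum
      intro j _
      have hA := (hasDerivAt_iteratedDeriv hs hf j hx).const_mul ((n.choose j : ℝ))
      have hB := hasDerivAt_iteratedDeriv hs hg (n - j) hx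
      exact hA.mul hB
    rw [hder.deriv]
    -- Pascal recombination
    set A : ℕ → ℝ := fun j => iteratedDeriv j f x with hA
    set B : ℕ → ℝ := fun j => iteratedDeriv j g x with hB
    have hsplit : ∑ j ∈ range (n + 1),
        ((n.choose j : ℝ) * A (j + 1) * B (n - j) + (n.choose j : ℝ) * A j * B (n - j + 1))
        = (∑ j ∈ range (n + 1), (n.choose j : ℝ) * A (j + 1) * B (n - j))
          + ∑ j ∈ range (n + 1), (n.choose j : ℝ) * A j * B (n + 1 - j) := by
      rw [Finset.sum_add_distrib]
      congr 1
      apply Finset.sum_congr rfl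
      intro j hj
      have : n - j + 1 = n + 1 - j := by
        have := Nat.lt_succ_iff.mp (mem_range.mp hj); omega
      rw [this]
    rw [hsplit]
    have hG : ∑ j ∈ range (n + 2), (n.choose j : ℝ) * A j * B (n + 1 - j)
        = (∑ j ∈ range (n + 1), (n.choose (j + 1) : ℝ) * A (j + 1) * B (n - j))
          + (n.choose 0 : ℝ) * A 0 * B (n + 1) := by
      rw [Finset.sum_range_succ' (fun j => (n.choose j : ℝ) * A j * B (n + 1 - j)) (n + 1)]
      congr 1
      apply Finset.sum_congr rfl
      intro j hj
      have : n + 1 - (j + 1) = n - j := by omega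
      rw [this]
    have hG2 : ∑ j ∈ range (n + 2), (n.choose j : ℝ) * A j * B (n + 1 - j)
        = ∑ j ∈ range (n + 1), (n.choose j : ℝ) * A j * B (n + 1 - j) := by
      rw [Finset.sum_range_succ]
      simp [Nat.choose_succ_self]
    rw [Finset.sum_range_succ' (fun j => ((n + 1).choose j : ℝ) * A j * B (n + 1 - j)) (n + 1)]
    have hterm : ∀ j ∈ range (n + 1),
        (((n + 1).choose (j + 1) : ℝ)) * A (j + 1) * B (n + 1 - (j + 1))
          = (n.choose j : ℝ) * A (j + 1) * B (n - j)
            + (n.choose (j + 1) : ℝ) * A (j + 1) * B (n - j) := by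
      intro j hj
      have hps : ((n + 1).choose (j + 1) : ℝ) = (n.choose j : ℝ) + (n.choose (j + 1) : ℝ) := by
        exact_mod_cast congrArg (Nat.cast (R := ℝ)) (Nat.choose_succ_succ n j)
      have : n + 1 - (j + 1) = n - j := by omega
      rw [this, hps]
      ring
    rw [Finset.sum_congr rfl hterm, Finset.sum_add_distrib]
    have : ((n+1).choose 0 : ℝ) * A 0 * B (n + 1 - 0) = (n.choose 0 : ℝ) * A 0 * B (n + 1) := by
      norm_num
    rw [this]
    have hback : (∑ j ∈ range (n + 1), (n.choose (j+1) : ℝ) * A (j + 1) * B (n - j))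
        + (n.choose 0 : ℝ) * A 0 * B (n + 1)
        = ∑ j ∈ range (n + 1), (n.choose j : ℝ) * A j * B (n + 1 - j) := by
      rw [← hG, hG2]
    linarith [hback]


lemma iteratedDeriv_cos_step (n : ℕ) (x : ℝ) :
    iteratedDeriv (n + 2) Real.cos x = -(iteratedDeriv n Real.cos x) := by
  have h1 : deriv Real.cos = fun y => -Real.sin y := by
    funext y; exact Real.deriv_cos
  have h2 : deriv (fun y => -Real.sin y) = fun y => -Real.cos y := by
    funext y
    rw [deriv.fun_neg]
    simp [Real.deriv_sin]
  rw [show n + 2 = (n + 1) + 1 from rfl, iteratedDeriv_succ', iteratedDeriv_succ', h1, h2]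
  exact iteratedDeriv_neg n Real.cos x

lemma iteratedDeriv_cos_zero : ∀ n : ℕ,
    iteratedDeriv n Real.cos 0 = if Even n then (-1 : ℝ) ^ (n / 2) else 0 := by
  intro n
  induction n using Nat.strong_induction_on with
  | _ n ih =>
    match n with
    | 0 => simp
    | 1 =>
      rw [iteratedDeriv_one]
      simp [Real.deriv_cos]
    | (m + 2) =>
      rw [iteratedDeriv_cos_step, ih m (by omega)]
      by_cases h : Even m
      · have h2 : Even (m + 2) := by rcases h with ⟨r, hr⟩; exact ⟨r + 1, by omega⟩
        rw [if_pos h, if_pos h2]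
        have : (m + 2) / 2 = m / 2 + 1 := by omega
        rw [this, pow_succ]
        ring
      · have h2 : ¬ Even (m + 2) := by
          intro ⟨r, hr⟩; exact h ⟨r - 1, by omega⟩
        rw [if_neg h, if_neg h2, neg_zero]

/-- Euler numbers: `E n` is the `n`-th Taylor coefficient (times `n!`) of `1/cos` at `0`. -/
noncomputable def eulerNumber (n : ℕ) : ℝ :=
  iteratedDeriv n (fun x : ℝ => (Real.cos x)⁻¹) 0

lemma eulerNumber_eq (n : ℕ) : eulerNumber n = iteratedDeriv n secR 0 := rfl

lemma cos_secrec (n : ℕ) :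
    ∑ j ∈ range (n + 1),
        (n.choose j : ℝ) * iteratedDeriv j Real.cos 0 * eulerNumber (n - j)
      = if n = 0 then 1 else 0 := by
  have hS : IsOpen {x : ℝ | Real.cos x ≠ 0} := by
    have : {x : ℝ | Real.cos x ≠ 0} = Real.cos ⁻¹' ({0}ᶜ) := rfl
    rw [this]
    exact isOpen_compl_singleton.preimage Real.continuous_cos
  have h0 : (0 : ℝ) ∈ {x : ℝ | Real.cos x ≠ 0} := by
    simp [Real.cos_zero]
  have hcos : ContDiffOn ℝ ((⊤ : ℕ∞) : WithTop ℕ∞) Real.cos {x : ℝ | Real.cos x ≠ 0} :=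
    Real.contDiff_cos.contDiffOn
  have hsec : ContDiffOn ℝ ((⊤ : ℕ∞) : WithTop ℕ∞) secR {x : ℝ | Real.cos x ≠ 0} :=
    hcos.inv (fun x hx => hx)
  have hL := iteratedDeriv_mul_of_isOpen hS hcos hsec n 0 h0
  have hone : iteratedDeriv n (fun y => Real.cos y * secR y) 0
      = iteratedDeriv n (fun _ : ℝ => (1 : ℝ)) 0 := by
    apply Filter.EventuallyEq.iteratedDeriv_eq
    filter_upwards [hS.mem_nhds h0] with y hy
    exact mul_inv_cancel₀ hy
  rw [hone, iteratedDeriv_const_fun] at hL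
  simp only [eulerNumber_eq]
  exact hL.symm

lemma eulerNumber_odd_eq_zero {n : ℕ} (hn : Odd n) : eulerNumber n = 0 := by
  have hfun : (fun x : ℝ => (Real.cos x)⁻¹) = fun x : ℝ => secR (-x) := by
    funext x
    simp [secR, Real.cos_neg]
  have h : eulerNumber n = (-1 : ℝ) ^ n • iteratedDeriv n secR (-(0:ℝ)) := by
    rw [eulerNumber, hfun]
    exact iteratedDeriv_comp_neg n secR 0
  rw [neg_zero, ← eulerNumber_eq, hn.neg_one_pow, smul_eq_mul] at h
  linarith [h]

/-- The signed Euler numbers. -/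
noncomputable def eulerH (n : ℕ) : ℝ := (-1 : ℝ) ^ (n / 2) * eulerNumber n

lemma eulerH_rec (n : ℕ) :
    ∑ j ∈ range (n + 1), (n.choose j : ℝ) * ((-1 : ℝ) ^ j + 1) * eulerH (n - j)
      = if n = 0 then 2 else 0 := by
  rcases Nat.even_or_odd n with hn | hn
  · -- n even
    have key : ∀ j ∈ range (n + 1),
        (n.choose j : ℝ) * ((-1 : ℝ) ^ j + 1) * eulerH (n - j)
          = 2 * (-1 : ℝ) ^ (n / 2) *
            ((n.choose j : ℝ) * iteratedDeriv j Real.cos 0 * eulerNumber (n - j)) := by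
      intro j hj
      have hjn : j ≤ n := Nat.lt_succ_iff.mp (mem_range.mp hj)
      rcases Nat.even_or_odd j with hje | hjo
      · have hnj : Even (n - j) := by
          rcases hn with ⟨a, ha⟩; rcases hje with ⟨b, hb⟩
          exact ⟨a - b, by omega⟩
        rw [iteratedDeriv_cos_zero, if_pos hje, eulerH]
        have hsign : (-1 : ℝ) ^ ((n - j) / 2) = (-1 : ℝ) ^ (n / 2) * (-1 : ℝ) ^ (j / 2) := by
          rcases hn with ⟨a, ha⟩; rcases hje with ⟨b, hb⟩
          have hba : b ≤ a := by omega
          have h1 : (n - j) / 2 = a - b := by omega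
          have h2 : n / 2 = a := by omega
          have h3 : j / 2 = b := by omega
          rw [h1, h2, h3]
          have : (-1 : ℝ) ^ a = (-1 : ℝ) ^ (a - b) * (-1 : ℝ) ^ b := by
            rw [← pow_add, Nat.sub_add_cancel hba]
          rw [this, mul_assoc, ← pow_add]
          simp [← two_mul, pow_mul]
        rw [hsign, hje.neg_one_pow]
        ring
      · rw [iteratedDeriv_cos_zero, if_neg (Nat.not_even_iff_odd.mpr hjo), hjo.neg_one_pow]
        ring
    rw [Finset.sum_congr rfl key, ← Finset.mul_sum, cos_secrec]
    split_ifs with h0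
    · subst h0; norm_num
    · ring
  · -- n odd : all terms vanish
    have key : ∀ j ∈ range (n + 1),
        (n.choose j : ℝ) * ((-1 : ℝ) ^ j + 1) * eulerH (n - j) = 0 := by
      intro j hj
      have hjn : j ≤ n := Nat.lt_succ_iff.mp (mem_range.mp hj)
      rcases Nat.even_or_odd j with hje | hjo
      · have hnj : Odd (n - j) := by
          rcases hn with ⟨a, ha⟩; rcases hje with ⟨b, hb⟩
          exact ⟨a - b, by omega⟩
        rw [eulerH, eulerNumber_odd_eq_zero hnj]
        ring
      · rw [hjo.neg_one_pow]
        ring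
    rw [Finset.sum_congr rfl key]
    have : n ≠ 0 := by rintro rfl; exact absurd (Nat.odd_iff.mp hn) (by norm_num)
    simp [this]

noncomputable def eulerGR (n : ℕ) : ℝ := (eulerG n : ℝ)

lemma eulerGR_rec (n : ℕ) :
    (∑ j ∈ range (n + 1), (n.choose j : ℝ) * eulerGR (n - j)) + eulerGR n
      = if n = 0 then 2 else 0 := by
  have h := congrArg (fun q : ℚ => (q : ℝ)) (eulerG_rec n)
  simp only [Rat.cast_add, Rat.cast_sum, Rat.cast_mul, Rat.cast_natCast,
    apply_ite (fun q : ℚ => (q : ℝ)), Rat.cast_ofNat, Rat.cast_zero] at h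
  simpa [eulerGR] using h

lemma w_rec (n : ℕ) :
    (∑ j ∈ range (n + 1), (n.choose j : ℝ) * (-2) ^ j * ((-2) ^ (n - j) * eulerGR (n - j)))
      + (-2) ^ n * eulerGR n = if n = 0 then 2 else 0 := by
  have key : ∀ j ∈ range (n + 1),
      (n.choose j : ℝ) * (-2) ^ j * ((-2) ^ (n - j) * eulerGR (n - j))
        = (-2) ^ n * ((n.choose j : ℝ) * eulerGR (n - j)) := by
    intro j hj
    have hjn : j ≤ n := Nat.lt_succ_iff.mp (Finset.mem_range.mp hj)
    have hp : (-2 : ℝ) ^ j * (-2 : ℝ) ^ (n - j) = (-2 : ℝ) ^ n := by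
      rw [← pow_add]; congr 1; omega
    calc (n.choose j : ℝ) * (-2) ^ j * ((-2) ^ (n - j) * eulerGR (n - j))
        = ((-2 : ℝ) ^ j * (-2 : ℝ) ^ (n - j)) * ((n.choose j : ℝ) * eulerGR (n - j)) := by ring
      _ = (-2) ^ n * ((n.choose j : ℝ) * eulerGR (n - j)) := by rw [hp]
  rw [Finset.sum_congr rfl key, ← Finset.mul_sum]
  have h := eulerGR_rec n
  have : (-2 : ℝ) ^ n * (∑ j ∈ range (n + 1), (n.choose j : ℝ) * eulerGR (n - j))
      + (-2) ^ n * eulerGR n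
      = (-2 : ℝ) ^ n * ((∑ j ∈ range (n + 1), (n.choose j : ℝ) * eulerGR (n - j)) + eulerGR n) := by
    ring
  rw [this, h]
  split_ifs with h0
  · subst h0; norm_num
  · ring

lemma v_rec (n : ℕ) :
    (∑ j ∈ range (n + 1), (n.choose j : ℝ) * (-2) ^ j *
        (∑ i ∈ range (n - j + 1), ((n - j).choose i : ℝ) * eulerH i))
      + (∑ i ∈ range (n + 1), (n.choose i : ℝ) * eulerH i)
      = if n = 0 then 2 else 0 := by
  rw [conv_exp (-2) eulerH n]
  have h := eulerH_rec n
  rw [← Finset.sum_range_reflect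
    (fun j => (n.choose j : ℝ) * ((-1 : ℝ) ^ j + 1) * eulerH (n - j)) (n + 1)] at h
  have hcongr : ∀ j ∈ range (n + 1),
      (n.choose (n + 1 - 1 - j) : ℝ) * ((-1 : ℝ) ^ (n + 1 - 1 - j) + 1)
          * eulerH (n - (n + 1 - 1 - j))
        = (n.choose j : ℝ) * (-1) ^ (n - j) * eulerH j + (n.choose j : ℝ) * eulerH j := by
    intro j hj
    have hjn : j ≤ n := Nat.lt_succ_iff.mp (Finset.mem_range.mp hj)
    have e1 : n + 1 - 1 - j = n - j := by omega
    have e2 : n - (n - j) = j := by omega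
    have e3 : n.choose (n - j) = n.choose j := Nat.choose_symm hjn
    rw [e1, e2, e3]
    ring
  rw [Finset.sum_congr rfl hcongr, Finset.sum_add_distrib] at h
  have hpow : ∀ m ∈ range (n + 1),
      (n.choose m : ℝ) * (1 + -2) ^ (n - m) * eulerH m
        = (n.choose m : ℝ) * (-1) ^ (n - m) * eulerH m := by
    intro m _
    norm_num
  rw [Finset.sum_congr rfl hpow]
  exact h

lemma euler_bridge : ∀ m : ℕ,
    (∑ i ∈ range (m + 1), (m.choose i : ℝ) * eulerH i) = (-2 : ℝ) ^ m * eulerGR m := by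
  intro m
  induction m using Nat.strong_induction_on with
  | _ n ih =>
    have hv := v_rec n
    have hw := w_rec n
    rw [Finset.sum_range_succ' _ n] at hv hw
    simp only [Nat.choose_zero_right, pow_zero, Nat.cast_one, one_mul, Nat.sub_zero, mul_one] at hv hw
    have hsame : ∀ j ∈ range n,
        (n.choose (j + 1) : ℝ) * (-2) ^ (j + 1) *
          (∑ i ∈ range (n - (j + 1) + 1), ((n - (j + 1)).choose i : ℝ) * eulerH i)
        = (n.choose (j + 1) : ℝ) * (-2) ^ (j + 1) *
          ((-2) ^ (n - (j + 1)) * eulerGR (n - (j + 1))) := by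
      intro j hj
      rw [ih (n - (j + 1)) (by have := Finset.mem_range.mp hj; omega)]
    rw [Finset.sum_congr rfl hsame] at hv
    have := hv.trans hw.symm
    linarith [this]

lemma eulerGR_formula (j : ℕ) :
    eulerGR j = -2 * (2 ^ (j + 1) - 1) * (bernoulli (j + 1) : ℝ) / ((j : ℝ) + 1) := by
  rw [eulerGR, eulerG]
  push_cast
  ring

lemma eulerGR_zero : eulerGR 0 = 1 := by
  rw [eulerGR_formula]
  norm_num [bernoulli_one]

theorem bernoulli_euler_two_parameter (k : ℕ) (hk : 1 ≤ k) (a q : ℝ) (ha : 0 < a) :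
    q ^ k / 2 - ∑ j ∈ Finset.Icc 1 k,
        (k.choose j : ℝ) * q ^ (k - j) * a ^ j * ((2 ^ (j + 1) - 1) / (j + 1))
          * (bernoulli (j + 1) : ℝ)
      = ((-1 : ℝ) ^ k / 2) * ∑ j ∈ Finset.range (k + 1),
          (k.choose j : ℝ) * (a / 2 - q) ^ (k - j) * (a / 2) ^ j
            * (-1 : ℝ) ^ (j / 2) * eulerNumber j := by
  -- Step 1 : rewrite the left side via `eulerGR`
  have hsplit : range (k + 1) = insert 0 (Finset.Icc 1 k) := by
    ext x
    simp only [Finset.mem_range, Finset.mem_insert, Finset.mem_Icc, Nat.lt_succ_iff]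
    omega
  have hL : q ^ k / 2 - ∑ j ∈ Finset.Icc 1 k,
        (k.choose j : ℝ) * q ^ (k - j) * a ^ j * ((2 ^ (j + 1) - 1) / (j + 1))
          * (bernoulli (j + 1) : ℝ)
      = (1 / 2) * ∑ j ∈ range (k + 1),
          (k.choose j : ℝ) * q ^ (k - j) * a ^ j * eulerGR j := by
    rw [hsplit, Finset.sum_insert (by simp)]
    rw [show ((k.choose 0 : ℝ) * q ^ (k - 0) * a ^ 0 * eulerGR 0) = q ^ k by
      rw [eulerGR_zero]; simp]
    have hterm : ∀ j ∈ Finset.Icc 1 k,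
        (k.choose j : ℝ) * q ^ (k - j) * a ^ j * ((2 ^ (j + 1) - 1) / (j + 1))
            * (bernoulli (j + 1) : ℝ)
          = -(1 / 2) * ((k.choose j : ℝ) * q ^ (k - j) * a ^ j * eulerGR j) := by
      intro j _
      rw [eulerGR_formula j]
      have hj1 : ((j : ℝ) + 1) ≠ 0 := by positivity
      field_simp
    rw [Finset.sum_congr rfl hterm, ← Finset.mul_sum]
    ring
  -- Step 2 : the main identity
  have main : ∑ j ∈ range (k + 1), (k.choose j : ℝ) * q ^ (k - j) * a ^ j * eulerGR j
      = (-1 : ℝ) ^ k * ∑ j ∈ range (k + 1),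
          (k.choose j : ℝ) * (a / 2 - q) ^ (k - j) * (a / 2) ^ j
            * (-1 : ℝ) ^ (j / 2) * eulerNumber j := by
    -- expand the right-hand sum
    have step1 : ∑ j ∈ range (k + 1),
        (k.choose j : ℝ) * (a / 2 - q) ^ (k - j) * (a / 2) ^ j
          * (-1 : ℝ) ^ (j / 2) * eulerNumber j
        = ∑ j ∈ range (k + 1), ∑ i ∈ range (k - j + 1),
            (k.choose j : ℝ) * (((k - j).choose i : ℝ) * (-q) ^ i * (a / 2) ^ (k - i))
              * eulerH j := by
      apply Finset.sum_congr rfl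
      intro j hj
      have hjk : j ≤ k := Nat.lt_succ_iff.mp (Finset.mem_range.mp hj)
      have hexp : (a / 2 - q) ^ (k - j)
          = ∑ i ∈ range (k - j + 1), (a / 2) ^ i * (-q) ^ (k - j - i) * ((k - j).choose i : ℝ) := by
        rw [show a / 2 - q = a / 2 + -q by ring]
        exact add_pow (a / 2) (-q) (k - j)
      rw [hexp]
      rw [← Finset.sum_range_reflect
        (fun i => (a / 2) ^ i * (-q) ^ (k - j - i) * ((k - j).choose i : ℝ)) (k - j + 1)]
      rw [Finset.mul_sum, Finset.sum_mul, Finset.sum_mul, Finset.sum_mul]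
      apply Finset.sum_congr rfl
      intro i hi
      have hik : i ≤ k - j := Nat.lt_succ_iff.mp (Finset.mem_range.mp hi)
      have e1 : k - j + 1 - 1 - i = k - j - i := by omega
      have e2 : k - j - (k - j - i) = i := by omega
      have e3 : (k - j).choose (k - j - i) = (k - j).choose i := Nat.choose_symm hik
      have e4 : (a / 2 : ℝ) ^ (k - j - i) * (a / 2) ^ j = (a / 2) ^ (k - i) := by
        rw [← pow_add]; congr 1; omega
      rw [e1, e2, e3]
      calc (k.choose j : ℝ) * ((a / 2) ^ (k - j - i) * (-q) ^ i * ((k - j).choose i : ℝ))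
            * (a / 2) ^ j * (-1 : ℝ) ^ (j / 2) * eulerNumber j
          = (k.choose j : ℝ) * (((k - j).choose i : ℝ) * (-q) ^ i
              * ((a / 2) ^ (k - j - i) * (a / 2) ^ j))
              * ((-1 : ℝ) ^ (j / 2) * eulerNumber j) := by ring
        _ = (k.choose j : ℝ) * (((k - j).choose i : ℝ) * (-q) ^ i * (a / 2) ^ (k - i))
              * eulerH j := by rw [e4, eulerH]
    rw [step1]
    rw [Finset.sum_comm' (s' := fun i => range (k - i + 1)) (t' := range (k + 1))
      (by intro j i; simp only [Finset.mem_range, Nat.lt_succ_iff]; omega)]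
    -- inner sums via the bridge
    have step3 : ∀ i ∈ range (k + 1),
        ∑ j ∈ range (k - i + 1),
            (k.choose j : ℝ) * (((k - j).choose i : ℝ) * (-q) ^ i * (a / 2) ^ (k - i))
              * eulerH j
          = (-q) ^ i * (a / 2) ^ (k - i) * (k.choose i : ℝ)
              * ((-2 : ℝ) ^ (k - i) * eulerGR (k - i)) := by
      intro i hi
      have hik : i ≤ k := Nat.lt_succ_iff.mp (Finset.mem_range.mp hi)
      have hterm : ∀ j ∈ range (k - i + 1),
          (k.choose j : ℝ) * (((k - j).choose i : ℝ) * (-q) ^ i * (a / 2) ^ (k - i)) * eulerH j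
            = ((-q) ^ i * (a / 2) ^ (k - i) * (k.choose i : ℝ))
                * (((k - i).choose j : ℝ) * eulerH j) := by
        intro j hj
        have hjk : j ≤ k - i := Nat.lt_succ_iff.mp (Finset.mem_range.mp hj)
        have hij : i + j ≤ k := by omega
        have hcc := choose_swap (n := k) (i := i) (j := j) hij
        have hccR : (k.choose j : ℝ) * ((k - j).choose i : ℝ)
            = (k.choose i : ℝ) * ((k - i).choose j : ℝ) := by
          exact_mod_cast congrArg (Nat.cast (R := ℝ)) hcc
        calc (k.choose j : ℝ) * (((k - j).choose i : ℝ) * (-q) ^ i * (a / 2) ^ (k - i))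
              * eulerH j
            = ((k.choose j : ℝ) * ((k - j).choose i : ℝ))
                * ((-q) ^ i * (a / 2) ^ (k - i) * eulerH j) := by ring
          _ = ((k.choose i : ℝ) * ((k - i).choose j : ℝ))
                * ((-q) ^ i * (a / 2) ^ (k - i) * eulerH j) := by rw [hccR]
          _ = ((-q) ^ i * (a / 2) ^ (k - i) * (k.choose i : ℝ))
                * (((k - i).choose j : ℝ) * eulerH j) := by ring
      rw [Finset.sum_congr rfl hterm, ← Finset.mul_sum, euler_bridge (k - i)]
    rw [Finset.sum_congr rfl step3, Finset.mul_sum]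
    -- final per-term comparison
    rw [← Finset.sum_range_reflect
      (fun j => (k.choose j : ℝ) * q ^ (k - j) * a ^ j * eulerGR j) (k + 1)]
    apply Finset.sum_congr rfl
    intro i hi
    have hik : i ≤ k := Nat.lt_succ_iff.mp (Finset.mem_range.mp hi)
    have e1 : k + 1 - 1 - i = k - i := by omega
    have e2 : k - (k - i) = i := by omega
    have e3 : k.choose (k - i) = k.choose i := Nat.choose_symm hik
    rw [e1, e2, e3]
    -- now : C(k,i) q^i a^(k-i) gR(k-i) = (-1)^k * ((-q)^i (a/2)^(k-i) C(k,i) ((-2)^(k-i) gR(k-i)))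
    have hnq : (-q : ℝ) ^ i = (-1 : ℝ) ^ i * q ^ i := by rw [neg_pow]
    have hn2 : (-2 : ℝ) ^ (k - i) = (-1 : ℝ) ^ (k - i) * 2 ^ (k - i) := by rw [neg_pow]
    have hsgn : (-1 : ℝ) ^ i * (-1 : ℝ) ^ (k - i) = (-1 : ℝ) ^ k := by
      rw [← pow_add]; congr 1; omega
    have hsq : (-1 : ℝ) ^ k * (-1 : ℝ) ^ k = 1 := by
      rw [← pow_add]
      exact Even.neg_one_pow ⟨k, rfl⟩
    have h2p : (a / 2 : ℝ) ^ (k - i) * 2 ^ (k - i) = a ^ (k - i) := by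
      rw [← mul_pow]; norm_num
    calc (k.choose i : ℝ) * q ^ i * a ^ (k - i) * eulerGR (k - i)
        = ((k.choose i : ℝ) * q ^ i * eulerGR (k - i)) * (a ^ (k - i)) := by ring
      _ = ((k.choose i : ℝ) * q ^ i * eulerGR (k - i))
            * ((a / 2 : ℝ) ^ (k - i) * 2 ^ (k - i)) := by rw [h2p]
      _ = ((-1 : ℝ) ^ k * (-1 : ℝ) ^ k)
            * (((k.choose i : ℝ) * q ^ i * eulerGR (k - i))
              * ((a / 2 : ℝ) ^ (k - i) * 2 ^ (k - i))) := by rw [hsq]; ring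
      _ = (-1 : ℝ) ^ k * (((-1 : ℝ) ^ i * (-1 : ℝ) ^ (k - i))
            * (((k.choose i : ℝ) * q ^ i * eulerGR (k - i))
              * ((a / 2 : ℝ) ^ (k - i) * 2 ^ (k - i)))) := by rw [hsgn]; ring
      _ = (-1 : ℝ) ^ k * ((-q) ^ i * (a / 2) ^ (k - i) * (k.choose i : ℝ)
            * ((-2 : ℝ) ^ (k - i) * eulerGR (k - i))) := by rw [hnq, hn2]; ring
  rw [hL, main]
  ring
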